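/- Let w ∈ ℂ and let f, g be meromorphic at w, neither identically zero near w, with orders a = ord_w(f) and b = ord_w(g). Then the meromorphic function z ↦ (−1)^{ab} f(z)^b / g(z)^a extends to a holomorphic, nonvanishing function at w; let T ∈ ℂ* be its value at w (the tame symbol (f,g)_w). Then lim_{r→0⁺} (1/(2π)) ∫₀^{2π} [ log|f(w + re^{iθ})| · Im( i·r·e^{iθ} · g'(w + re^{iθ})/g(w + re^{iθ}) ) − log|g(w + re^{iθ})| · Im( i·r·e^{iθ} · f'(w + re^{iθ})/f(w + re^{iθ}) ) ] dθ = log|T|; that is, the integral of the 1-form η(f,g) = log|f| d(arg g) − log|g| d(arg f) over a small positively oriented circle of radius r around w tends to 2π·log|(f,g)_w| as r → 0. -/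

import Mathlib

open scoped Real
open Filter

/-- Integrating the 1-form `η(f,g) = log|f| d(arg g) − log|g| d(arg f)` over a small
positively oriented circle around `w` recovers the tame symbol: if `f, g` are meromorphic
at `w`, not identically zero near `w`, with orders `a = ord_w(f)`, `b = ord_w(g)`, and if
`T ≠ 0` is the value at `w` of the (holomorphic, nonvanishing) extension of
`z ↦ (−1)^{ab} f(z)^b / g(z)^a`, then
`(1/2π) ∫₀^{2π} [log|f| · Im(i r e^{iθ} g'/g) − log|g| · Im(i r e^{iθ} f'/f)] dθ → log|T|`
as `r → 0⁺`. -/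
theorem eta_circle_integral_tendsto_log_tame_symbol
    (f g : ℂ → ℂ) (w : ℂ) (a b : ℤ)
    (hf : MeromorphicAt f w) (hg : MeromorphicAt g w)
    (ha : meromorphicOrderAt f w = (a : WithTop ℤ)) (hb : meromorphicOrderAt g w = (b : WithTop ℤ))
    (T : ℂ) (hT : T ≠ 0)
    (hTval : Tendsto (fun z => (-1 : ℂ) ^ (a * b) * (f z) ^ b / (g z) ^ a)
      (nhdsWithin w {w}ᶜ) (nhds T)) :
    Tendsto (fun r : ℝ =>
        (1 / (2 * π)) * ∫ θ in (0:ℝ)..(2 * π),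
          (Real.log ‖f (w + r * Complex.exp (θ * Complex.I))‖ *
              (Complex.I * r * Complex.exp (θ * Complex.I) *
                deriv g (w + r * Complex.exp (θ * Complex.I)) /
                  g (w + r * Complex.exp (θ * Complex.I))).im -
            Real.log ‖g (w + r * Complex.exp (θ * Complex.I))‖ *
              (Complex.I * r * Complex.exp (θ * Complex.I) *
                deriv f (w + r * Complex.exp (θ * Complex.I)) /
                  f (w + r * Complex.exp (θ * Complex.I))).im))
      (nhdsWithin 0 (Set.Ioi 0)) (nhds (Real.log ‖T‖)) := by
  obtain ⟨u, hu, hu0, hfu⟩ := (meromorphicOrderAt_eq_int_iff hf).mp ha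
  obtain ⟨v, hv, hv0, hgv⟩ := (meromorphicOrderAt_eq_int_iff hg).mp hb
  -- package the local data into one eventual statement
  have hpac : ∀ᶠ z in nhds w, AnalyticAt ℂ u z ∧ AnalyticAt ℂ v z ∧ u z ≠ 0 ∧ v z ≠ 0 ∧
      (z ≠ w → f z = (z - w) ^ a * u z ∧ g z = (z - w) ^ b * v z) := by
    have h5 := eventually_nhdsWithin_iff.mp hfu
    have h6 := eventually_nhdsWithin_iff.mp hgv
    filter_upwards [hu.eventually_analyticAt, hv.eventually_analyticAt,
      hu.continuousAt.eventually_ne hu0, hv.continuousAt.eventually_ne hv0, h5, h6] with z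
      p1 p2 p3 p4 p5 p6
    refine ⟨p1, p2, p3, p4, fun hz => ⟨?_, ?_⟩⟩
    · simpa [smul_eq_mul] using p5 hz
    · simpa [smul_eq_mul] using p6 hz
  rw [Metric.eventually_nhds_iff] at hpac
  obtain ⟨ε, hε, hball⟩ := hpac
  -- the value of T
  have hTw : T = (-1 : ℂ) ^ (a * b) * (u w) ^ b / (v w) ^ a := by
    have h2 : Tendsto (fun z => (-1 : ℂ) ^ (a * b) * (u z) ^ b / (v z) ^ a)
        (nhdsWithin w {w}ᶜ) (nhds ((-1 : ℂ) ^ (a * b) * (u w) ^ b / (v w) ^ a)) := by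
      apply Tendsto.mono_left _ nhdsWithin_le_nhds
      exact ((continuousAt_const.mul (hu.continuousAt.zpow₀ b (Or.inl hu0))).div
        (hv.continuousAt.zpow₀ a (Or.inl hv0)) (zpow_ne_zero a hv0)).tendsto
    have heq : (fun z => (-1 : ℂ) ^ (a * b) * f z ^ b / g z ^ a) =ᶠ[nhdsWithin w {w}ᶜ]
        (fun z => (-1 : ℂ) ^ (a * b) * (u z) ^ b / (v z) ^ a) := by
      filter_upwards [hfu, hgv, self_mem_nhdsWithin,
        nhdsWithin_le_nhds (hu.continuousAt.eventually_ne hu0),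
        nhdsWithin_le_nhds (hv.continuousAt.eventually_ne hv0)] with z h1 h2 h3 h4 h5
      have hz : z - w ≠ 0 := sub_ne_zero.mpr h3
      have hzab : (z - w) ^ (a * b) ≠ 0 := zpow_ne_zero _ hz
      rw [h1, h2, smul_eq_mul, smul_eq_mul, mul_zpow, mul_zpow, ← zpow_mul, ← zpow_mul,
        mul_comm b a, mul_div_assoc, mul_div_mul_left _ _ hzab]
      ring
    exact tendsto_nhds_unique (hTval.congr' heq) h2
  -- the limiting value
  have habsu : ‖u w‖ ≠ 0 := by simpa using hu0
  have habsv : ‖v w‖ ≠ 0 := by simpa using hv0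
  have hlogT : Real.log (‖T‖)
      = (b : ℝ) * Real.log (‖u w‖) - (a : ℝ) * Real.log (‖v w‖) := by
    have hm1 : ‖(-1 : ℂ)‖ = 1 := by simp
    rw [hTw, norm_div, norm_mul, norm_zpow, norm_zpow, norm_zpow, hm1, one_zpow, one_mul,
      Real.log_div (zpow_ne_zero _ habsu) (zpow_ne_zero _ habsv),
      Real.log_zpow, Real.log_zpow]
  set ε' : ℝ := ε / 2 with hε'def
  have hε' : 0 < ε' := by positivity
  -- abbreviations
  set Z : ℝ × ℝ → ℂ := fun p => w + p.1 * Complex.exp (p.2 * Complex.I) with hZdef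
  have hZcont : Continuous Z := by fun_prop
  have hZmem : ∀ p : ℝ × ℝ, p.1 ∈ Set.Icc 0 ε' → dist (Z p) w < ε := by
    intro p hp
    have : dist (Z p) w = |p.1| := by
      simp [hZdef, Complex.dist_eq, norm_mul, Complex.norm_real,
        Complex.norm_exp_ofReal_mul_I]
    rw [this, abs_of_nonneg hp.1]
    calc p.1 ≤ ε' := hp.2
    _ < ε := by rw [hε'def]; linarith
  -- continuity of the pieces on the ball
  have hUan : ∀ z ∈ Metric.ball w ε, AnalyticAt ℂ u z := fun z hz => (hball hz).1
  have hVan : ∀ z ∈ Metric.ball w ε, AnalyticAt ℂ v z := fun z hz => (hball hz).2.1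
  have hUc : ContinuousOn u (Metric.ball w ε) :=
    fun z hz => ((hUan z hz).continuousAt).continuousWithinAt
  have hVc : ContinuousOn v (Metric.ball w ε) :=
    fun z hz => ((hVan z hz).continuousAt).continuousWithinAt
  have hU'c : ContinuousOn (deriv u) (Metric.ball w ε) := by
    have : AnalyticOnNhd ℂ (deriv u) (Metric.ball w ε) := AnalyticOnNhd.deriv hUan
    exact this.continuousOn
  have hV'c : ContinuousOn (deriv v) (Metric.ball w ε) := by
    have : AnalyticOnNhd ℂ (deriv v) (Metric.ball w ε) := AnalyticOnNhd.deriv hVan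
    exact this.continuousOn
  -- the key functions
  set K : Set (ℝ × ℝ) := Set.Icc 0 ε' ×ˢ (Set.univ : Set ℝ) with hKdef
  have hKmem : ∀ p ∈ K, Z p ∈ Metric.ball w ε := by
    intro p hp
    exact Metric.mem_ball.mpr (hZmem p hp.1)
  set Lu : ℝ × ℝ → ℝ := fun p => Real.log (‖u (Z p)‖) with hLudef
  set Lv : ℝ × ℝ → ℝ := fun p => Real.log (‖v (Z p)‖) with hLvdef
  set Wu : ℝ × ℝ → ℝ := fun p =>
    (Complex.I * Complex.exp (p.2 * Complex.I) * deriv u (Z p) / u (Z p)).im with hWudef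
  set Wv : ℝ × ℝ → ℝ := fun p =>
    (Complex.I * Complex.exp (p.2 * Complex.I) * deriv v (Z p) / v (Z p)).im with hWvdef
  set G : ℝ × ℝ → ℝ := fun p =>
    (b : ℝ) * Lu p - (a : ℝ) * Lv p + p.1 * (Lu p * Wv p - Lv p * Wu p)
      + (p.1 * Real.log p.1) * ((a : ℝ) * Wv p - (b : ℝ) * Wu p) with hGdef
  have hLuc : ContinuousOn Lu K := by
    apply ContinuousOn.log
    · exact continuous_norm.comp_continuousOn (hUc.comp hZcont.continuousOn hKmem)
    · intro p hp
      simpa using (hball (hKmem p hp)).2.2.1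
  have hLvc : ContinuousOn Lv K := by
    apply ContinuousOn.log
    · exact continuous_norm.comp_continuousOn (hVc.comp hZcont.continuousOn hKmem)
    · intro p hp
      simpa using (hball (hKmem p hp)).2.2.2.1
  have hWuc : ContinuousOn Wu K := by
    apply Complex.continuous_im.comp_continuousOn
    apply ContinuousOn.div
    · exact ((continuous_const.mul (Complex.continuous_exp.comp
        ((Complex.continuous_ofReal.comp continuous_snd).mul continuous_const))).continuousOn).mul
        (hU'c.comp hZcont.continuousOn hKmem)
    · exact hUc.comp hZcont.continuousOn hKmem
    · intro p hp; exact (hball (hKmem p hp)).2.2.1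
  have hWvc : ContinuousOn Wv K := by
    apply Complex.continuous_im.comp_continuousOn
    apply ContinuousOn.div
    · exact ((continuous_const.mul (Complex.continuous_exp.comp
        ((Complex.continuous_ofReal.comp continuous_snd).mul continuous_const))).continuousOn).mul
        (hV'c.comp hZcont.continuousOn hKmem)
    · exact hVc.comp hZcont.continuousOn hKmem
    · intro p hp; exact (hball (hKmem p hp)).2.2.2.1
  have hGc : ContinuousOn G K := by
    apply ContinuousOn.add
    apply ContinuousOn.add
    · exact ((continuousOn_const.mul hLuc).sub (continuousOn_const.mul hLvc))
    · exact (continuous_fst.continuousOn).mul ((hLuc.mul hWvc).sub (hLvc.mul hWuc))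
    · exact ((Real.continuous_mul_log.comp continuous_fst).continuousOn).mul
        ((continuousOn_const.mul hWvc).sub (continuousOn_const.mul hWuc))
  -- the bound
  obtain ⟨C, hC⟩ := (isCompact_Icc.prod isCompact_Icc :
      IsCompact (Set.Icc (0:ℝ) ε' ×ˢ Set.Icc (0:ℝ) (2 * π))).exists_bound_of_continuousOn
      (hGc.mono (by intro p hp; exact ⟨hp.1, Set.mem_univ _⟩))
  -- value of the limit integral
  have hG0 : ∀ θ : ℝ, G (0, θ) = (b : ℝ) * Real.log (‖u w‖)
      - (a : ℝ) * Real.log (‖v w‖) := by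
    intro θ
    have hz0 : Z (0, θ) = w := by simp [hZdef]
    simp [hGdef, hLudef, hLvdef, hz0]
  -- dominated convergence
  have hmain : Tendsto (fun r : ℝ => ∫ θ in (0:ℝ)..(2 * π), G (r, θ))
      (nhdsWithin 0 (Set.Ioi 0)) (nhds (∫ θ in (0:ℝ)..(2 * π), G (0, θ))) := by
    have hsmall : Set.Ioo (0:ℝ) ε' ∈ nhdsWithin (0:ℝ) (Set.Ioi 0) :=
      Ioo_mem_nhdsGT_of_mem (by constructor <;> [exact le_refl 0; exact hε'])
    apply intervalIntegral.tendsto_integral_filter_of_dominated_convergence (fun _ => C)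
    · filter_upwards [hsmall] with r hr
      apply Continuous.aestronglyMeasurable
      have : Continuous fun θ : ℝ => (r, θ) := by fun_prop
      exact hGc.comp_continuous this
        (fun θ => ⟨⟨le_of_lt hr.1, le_of_lt hr.2⟩, Set.mem_univ _⟩)
    · filter_upwards [hsmall] with r hr
      apply Filter.Eventually.of_forall
      intro θ hθ
      have hθ' : θ ∈ Set.Icc 0 (2 * π) := by
        rw [Set.uIoc_of_le (by positivity : (0:ℝ) ≤ 2 * π)] at hθ
        exact ⟨le_of_lt hθ.1, hθ.2⟩
      exact hC (r, θ) ⟨⟨le_of_lt hr.1, le_of_lt hr.2⟩, hθ'⟩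
    · exact intervalIntegrable_const
    · apply Filter.Eventually.of_forall
      intro θ _
      have h1 : ContinuousWithinAt G K (0, θ) :=
        hGc _ ⟨⟨le_refl 0, le_of_lt hε'⟩, Set.mem_univ _⟩
      apply h1.tendsto.comp
      rw [tendsto_nhdsWithin_iff]
      constructor
      · exact ((tendsto_id.mono_left nhdsWithin_le_nhds).prodMk_nhds tendsto_const_nhds)
      · filter_upwards [Ioo_mem_nhdsGT_of_mem
          (by constructor <;> [exact le_refl 0; exact hε'] : (0:ℝ) ∈ Set.Ico 0 ε')] with r hr
        exact ⟨⟨le_of_lt hr.1, le_of_lt hr.2⟩, Set.mem_univ _⟩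
  have hint0 : (∫ θ in (0:ℝ)..(2 * π), G (0, θ)) = 2 * π * Real.log (‖T‖) := by
    rw [intervalIntegral.integral_congr (g := fun _ => (b : ℝ) * Real.log (‖u w‖)
      - (a : ℝ) * Real.log (‖v w‖)) (fun θ _ => hG0 θ)]
    rw [intervalIntegral.integral_const, hlogT, sub_zero, smul_eq_mul]
  -- conclude with congruence
  have hfinal : Tendsto (fun r : ℝ => (1 / (2 * π)) * ∫ θ in (0:ℝ)..(2 * π), G (r, θ))
      (nhdsWithin 0 (Set.Ioi 0)) (nhds (Real.log (‖T‖))) := by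
    have := hmain.const_mul (1 / (2 * π))
    rw [hint0] at this
    convert this using 2
    have hπ : (π : ℝ) ≠ 0 := Real.pi_ne_zero
    field_simp
  apply hfinal.congr'
  -- eventual equality of the two integrals
  filter_upwards [Ioo_mem_nhdsGT_of_mem
    (by constructor <;> [exact le_refl 0; exact hε'] : (0:ℝ) ∈ Set.Ico 0 ε')] with r hr
  congr 1
  apply intervalIntegral.integral_congr
  intro θ _
  -- the pointwise identity
  simp only [hGdef, hLudef, hLvdef, hWudef, hWvdef, hZdef]
  set E : ℂ := Complex.exp ((θ : ℂ) * Complex.I) with hEdef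
  have hE0 : E ≠ 0 := Complex.exp_ne_zero _
  have hr0 : (0:ℝ) < r := hr.1
  have hrC : (r : ℂ) ≠ 0 := by exact_mod_cast ne_of_gt hr0
  set c : ℂ := (r : ℂ) * E with hcdef
  have hc0 : c ≠ 0 := mul_ne_zero hrC hE0
  set z : ℂ := w + (r : ℂ) * E with hzdef
  have hzw : z - w = c := by rw [hzdef, hcdef]; ring
  have hzne : z ≠ w := by
    intro h
    apply hc0
    rw [← hzw, h, sub_self]
  have habsc : ‖c‖ = r := by
    rw [hcdef, norm_mul, Complex.norm_real, hEdef, Complex.norm_exp_ofReal_mul_I,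
      mul_one, Real.norm_of_nonneg hr0.le]
  have hdist : dist z w < ε := by
    have h1 : dist z w = r := by
      rw [Complex.dist_eq, hzw, habsc]
    rw [h1]
    have : ε' < ε := by rw [hε'def]; linarith
    linarith [hr.2]
  obtain ⟨hu_z, hv_z, hu0z, hv0z, heqz⟩ := hball hdist
  obtain ⟨hfz, hgz⟩ := heqz hzne
  rw [hzw] at hfz hgz
  have hopen : IsOpen {y : ℂ | dist y w < ε ∧ y ≠ w} :=
    (isOpen_lt (continuous_id.dist continuous_const) continuous_const).inter isOpen_ne
  -- derivative of f at z
  have hderiv : ∀ (F U : ℂ → ℂ) (n : ℤ), AnalyticAt ℂ U z →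
      (∀ ⦃y : ℂ⦄, dist y w < ε → y ≠ w → F y = (y - w) ^ n * U y) →
      deriv F z = (n : ℂ) * (z - w) ^ (n - 1) * U z + (z - w) ^ n * deriv U z := by
    intro F U n hUz hFU
    have hev : F =ᶠ[nhds z] (fun y => (y - w) ^ n * U y) := by
      filter_upwards [hopen.mem_nhds ⟨hdist, hzne⟩] with y hy
      exact hFU hy.1 hy.2
    rw [hev.deriv_eq]
    have h1 : HasDerivAt (fun y : ℂ => (y - w) ^ n) ((n : ℂ) * (z - w) ^ (n - 1)) z := by
      have h0 : HasDerivAt (fun y : ℂ => y - w) 1 z := (hasDerivAt_id z).sub_const w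
      have h2 := (hasDerivAt_zpow n (z - w) (Or.inl (sub_ne_zero.mpr hzne))).comp z h0
      simpa [Function.comp_def] using h2
    exact (h1.mul hUz.differentiableAt.hasDerivAt).deriv
  have hdf : deriv f z = (a : ℂ) * (z - w) ^ (a - 1) * u z + (z - w) ^ a * deriv u z :=
    hderiv f u a hu_z (fun y hy hy' => ((hball hy).2.2.2.2 hy').1)
  have hdg : deriv g z = (b : ℂ) * (z - w) ^ (b - 1) * v z + (z - w) ^ b * deriv v z :=
    hderiv g v b hv_z (fun y hy hy' => ((hball hy).2.2.2.2 hy').2)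
  rw [hzw] at hdf hdg
  -- the key complex identities
  have hkey : ∀ (F U : ℂ → ℂ) (n : ℤ), U z ≠ 0 → F z = c ^ n * U z →
      deriv F z = (n : ℂ) * c ^ (n - 1) * U z + c ^ n * deriv U z →
      Complex.I * (r : ℂ) * E * deriv F z / F z
        = (n : ℂ) * Complex.I + (r : ℂ) * (Complex.I * E * deriv U z / U z) := by
    intro F U n hU0 hFz hdF
    have hca : c ^ n ≠ 0 := zpow_ne_zero _ hc0
    rw [hdF, hFz, zpow_sub_one₀ hc0]
    rw [show Complex.I * (r : ℂ) * E = Complex.I * c by rw [hcdef]; ring,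
      show (r : ℂ) * (Complex.I * E * deriv U z / U z)
        = Complex.I * c * deriv U z / U z by rw [hcdef]; field_simp]
    field_simp
  have hfim := hkey f u a hu0z hfz hdf
  have hgim := hkey g v b hv0z hgz hdg
  -- the log identities
  have hlog : ∀ (F U : ℂ → ℂ) (n : ℤ), U z ≠ 0 → F z = c ^ n * U z →
      Real.log (‖F z‖)
        = (n : ℝ) * Real.log r + Real.log (‖U z‖) := by
    intro F U n hU0 hFz
    rw [hFz, norm_mul, norm_zpow, habsc,
      Real.log_mul (zpow_ne_zero _ (ne_of_gt hr0)) (by simpa using hU0),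
      Real.log_zpow]
  have hlogf := hlog f u a hu0z hfz
  have hlogg := hlog g v b hv0z hgz
  -- put everything together
  have himf : (Complex.I * (r : ℂ) * E * deriv f z / f z).im
      = (a : ℝ) + r * (Complex.I * E * deriv u z / u z).im := by
    rw [hfim]
    simp [Complex.add_im, Complex.mul_im]
  have himg : (Complex.I * (r : ℂ) * E * deriv g z / g z).im
      = (b : ℝ) + r * (Complex.I * E * deriv v z / v z).im := by
    rw [hgim]
    simp [Complex.add_im, Complex.mul_im]
  rw [hlogf, hlogg, himf, himg]
  ring
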